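/- For n ≥ 1 let Pₙ(α) = α·∏_{k=1}^{n−1}((n+1)α + k). Then Pₙ(α)/n! = (1/(n+1))·binomial((n+1)α + n − 1, n), and the coefficient of αᵏ in Pₙ(α) equals the number of pairs (a, σ) where a is a parking function of length n and σ is a permutation of {1,...,n} with exactly k cycles such that a∘σ = a (σ stabilizes the word a). -/

import Mathlib

open Polynomial

/-- `Pₙ(α) = α·∏_{k=1}^{n−1}((n+1)α + k)`. -/
noncomputable def Ppoly (n : ℕ) : Polynomial ℚ :=
  Polynomial.X *
    ∏ k ∈ Finset.Icc 1 (n - 1),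
      (Polynomial.C ((n : ℚ) + 1) * Polynomial.X + Polynomial.C (k : ℚ))

section Aux

open Equiv Equiv.Perm Finset

variable {n : ℕ}

/-- number of cycles including fixed points -/
def ncyc (σ : Equiv.Perm (Fin n)) : ℕ := σ.cycleType.card + (n - σ.support.card)

noncomputable def cycQuotEquiv (σ : Equiv.Perm (Fin n)) :
    Quotient (Equiv.Perm.SameCycle.setoid σ) ≃
      ({c // c ∈ σ.cycleFactorsFinset} ⊕ {x : Fin n // σ x = x}) := by
  classical
  refine Equiv.ofBijective (Quotient.lift (fun x =>
    if h : σ x = x then Sum.inr ⟨x, h⟩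
    else Sum.inl ⟨σ.cycleOf x, (Equiv.Perm.cycleOf_mem_cycleFactorsFinset_iff).2
      (Equiv.Perm.mem_support.2 h)⟩) ?_) ⟨?_, ?_⟩
  · rintro x y (hxy : σ.SameCycle x y)
    by_cases hx : σ x = x
    · obtain ⟨i, rfl⟩ := hxy
      have hix : (σ ^ i) x = x := Equiv.Perm.zpow_apply_eq_self_of_apply_eq_self hx i
      rw [hix]
    · have hy : σ y ≠ y := by
        intro hy
        obtain ⟨i, rfl⟩ := hxy.symm
        exact hx (by rwa [Equiv.Perm.zpow_apply_eq_self_of_apply_eq_self hy] at hx ⊢)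
      simp only [dif_neg hx, dif_neg hy, Sum.inl.injEq, Subtype.mk.injEq]
      exact hxy.cycleOf_eq
  · refine Quotient.ind₂ (fun x y h => ?_)
    simp only [Quotient.lift_mk] at h
    by_cases hx : σ x = x <;> by_cases hy : σ y = y <;>
      simp only [dif_pos, dif_neg, hx, hy, Sum.inl.injEq, Sum.inr.injEq, Subtype.mk.injEq,
        not_false_iff, reduceDIte] at h
    · exact Quotient.sound (h ▸ Equiv.Perm.SameCycle.refl σ x)
    · exact absurd h (by simp)
    · exact absurd h (by simp)
    · apply Quotient.sound
      have hmem : y ∈ (σ.cycleOf y).support := by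
        rw [Equiv.Perm.mem_support_cycleOf_iff]
        exact ⟨Equiv.Perm.SameCycle.refl σ y, Equiv.Perm.mem_support.2 hy⟩
      rw [← h, Equiv.Perm.mem_support_cycleOf_iff] at hmem
      exact hmem.1
  · rintro (⟨c, hc⟩ | ⟨x, hx⟩)
    · obtain ⟨x, hx⟩ := (Equiv.Perm.mem_cycleFactorsFinset_iff.1 hc).1.nonempty_support
      have hcx : c = σ.cycleOf x := Equiv.Perm.cycle_is_cycleOf hx hc
      have hσx : σ x ≠ x := by
        have := Equiv.Perm.mem_cycleFactorsFinset_iff.1 hc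
        intro h
        exact (Equiv.Perm.mem_support.1 hx) ((this.2 x hx).trans h)
      exact ⟨Quotient.mk _ x, by simp [dif_neg hσx, hcx]⟩
    · exact ⟨Quotient.mk _ x, by simp [dif_pos hx]⟩

lemma card_cycQuot (σ : Equiv.Perm (Fin n)) :
    Nat.card (Quotient (Equiv.Perm.SameCycle.setoid σ)) = ncyc σ := by
  classical
  rw [Nat.card_congr (cycQuotEquiv σ), Nat.card_sum]
  unfold ncyc
  congr 1
  · rw [Nat.card_eq_fintype_card, Fintype.card_coe, Equiv.Perm.cycleType_def,
      Multiset.card_map]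
    rfl
  · rw [Nat.card_eq_fintype_card, Fintype.card_subtype]
    have : Finset.filter (fun x => σ x = x) Finset.univ = σ.supportᶜ := by
      ext x; simp [Equiv.Perm.mem_support]
    rw [this, Finset.card_compl, Fintype.card_fin]

def invFunEquiv (σ : Equiv.Perm (Fin n)) (T : Type*) :
    {f : Fin n → T // f ∘ σ = f} ≃ (Quotient (Equiv.Perm.SameCycle.setoid σ) → T) where
  toFun := fun f => Quotient.lift f.1 (by
    have hkey : ∀ i : ℤ, ∀ x, f.1 ((σ ^ i) x) = f.1 x := by
      have h1 : ∀ x, f.1 (σ x) = f.1 x := fun x => congrFun f.2 x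
      have hneg : ∀ x, f.1 (σ⁻¹ x) = f.1 x := fun x => by
        conv_rhs => rw [← (show σ (σ⁻¹ x) = x from Equiv.apply_symm_apply σ x), h1]
      intro i
      induction i using Int.induction_on with
      | zero => simp
      | succ i ih => intro x; rw [zpow_add_one, Equiv.Perm.mul_apply, ih, h1]
      | pred i ih => intro x; rw [zpow_sub_one, Equiv.Perm.mul_apply, ih, hneg]
    rintro x y ⟨i, rfl⟩
    exact (hkey i x).symm)
  invFun := fun g => ⟨g ∘ Quotient.mk _, funext fun x =>
    congrArg g (Quotient.sound (⟨-1, by simp⟩ : σ.SameCycle (σ x) x))⟩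
  left_inv := fun f => rfl
  right_inv := fun g => funext fun q => by induction q using Quotient.ind; rfl

lemma card_inv (σ : Equiv.Perm (Fin n)) (T : Type*) [Fintype T] :
    Nat.card {f : Fin n → T // f ∘ σ = f} = Fintype.card T ^ ncyc σ := by
  rw [Nat.card_congr (invFunEquiv σ T), Nat.card_fun, card_cycQuot,
    Nat.card_eq_fintype_card]

attribute [local instance] arrowAction

lemma ofFn_get_cast {α : Type*} (l : List α) (h : l.length = n) :
    List.ofFn (fun i : Fin n => l.get (Fin.cast h.symm i)) = l := by
  apply List.ext_get (by simp [h])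
  intro i h1 h2
  simp [List.get_ofFn]

noncomputable def orbitQuotEquivSym (n q : ℕ) :
    MulAction.orbitRel.Quotient (Equiv.Perm (Fin n)) (Fin n → Fin q) ≃ Sym (Fin q) n := by
  classical
  refine Equiv.ofBijective (Quotient.lift (fun f =>
    (⟨Multiset.map f Finset.univ.val, by simp⟩ : Sym (Fin q) n)) ?_) ⟨?_, ?_⟩
  · intro f g hfg
    obtain ⟨σ, rfl⟩ := (MulAction.orbitRel_apply).1 hfg
    apply Subtype.ext
    show Multiset.map (g ∘ ⇑σ⁻¹) Finset.univ.val = Multiset.map g Finset.univ.val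
    rw [← Multiset.map_map]
    congr 1
    have : Finset.univ.val.map ⇑σ⁻¹ = (Finset.univ.map (σ⁻¹ : Equiv.Perm (Fin n)).toEmbedding).val := rfl
    rw [this, Finset.map_univ_equiv]
  · refine Quotient.ind₂ (fun f g h => ?_)
    apply Quotient.sound
    have hcount : ∀ t, Fintype.card {x // f x = t} = Fintype.card {x // g x = t} := by
      intro t
      have h2 := congrArg (Multiset.count t) (congrArg Subtype.val h)
      change Multiset.count t (Multiset.map f Finset.univ.val) =
        Multiset.count t (Multiset.map g Finset.univ.val) at h2
      simp only [Quotient.lift_mk, Multiset.count_map] at h2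
      rw [Fintype.card_subtype, Fintype.card_subtype]
      have hpred : ∀ (f : Fin n → Fin q),
          (Finset.filter (fun x => f x = t) Finset.univ).card =
            Multiset.card (Multiset.filter (fun a => t = f a) Finset.univ.val) := by
        intro f
        rw [show (Finset.filter (fun x => f x = t) Finset.univ).card =
            Multiset.card (Multiset.filter (fun x => f x = t) Finset.univ.val) from rfl]
        congr 1
        exact Multiset.filter_congr (fun x _ => eq_comm)
      rw [hpred f, hpred g, h2]
    let e : ∀ t, {x // f x = t} ≃ {x // g x = t} := fun t => Fintype.equivOfCardEq (hcount t)
    let σ : Equiv.Perm (Fin n) :=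
      ((Equiv.sigmaFiberEquiv f).symm.trans (Equiv.sigmaCongrRight e)).trans
        (Equiv.sigmaFiberEquiv g)
    have hgf : σ⁻¹ • g = f := by
      show g ∘ ⇑σ⁻¹⁻¹ = f
      rw [inv_inv]
      funext x
      exact (e (f x) ⟨x, rfl⟩).2
    exact MulAction.orbitRel_apply.mpr (MulAction.mem_orbit_iff.mpr ⟨σ⁻¹, hgf⟩)
  · rintro ⟨m, hm⟩
    have hl : m.toList.length = n := by rw [Multiset.length_toList]; exact hm
    refine ⟨Quotient.mk _ (fun i : Fin n => m.toList.get (Fin.cast hl.symm i)), Subtype.ext ?_⟩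
    show Multiset.map (fun i : Fin n => m.toList.get (Fin.cast hl.symm i)) Finset.univ.val = m
    rw [Fin.univ_val_map, ofFn_get_cast m.toList hl]
    exact m.coe_toList

lemma sum_pow_ncyc (n q : ℕ) :
    ∑ σ : Equiv.Perm (Fin n), q ^ ncyc σ = ∏ j ∈ Finset.range n, (q + j) := by
  classical
  letI F1 : ∀ σ : Equiv.Perm (Fin n), Fintype (MulAction.fixedBy (Fin n → Fin q) σ) :=
    fun σ => Fintype.ofFinite _
  letI F2 : Fintype (MulAction.orbitRel.Quotient (Equiv.Perm (Fin n)) (Fin n → Fin q)) :=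
    Fintype.ofFinite _
  have burn := MulAction.sum_card_fixedBy_eq_card_orbits_mul_card_group
    (Equiv.Perm (Fin n)) (Fin n → Fin q)
  have hfix : ∀ σ : Equiv.Perm (Fin n),
      Fintype.card (MulAction.fixedBy (Fin n → Fin q) σ) = q ^ ncyc σ := by
    intro σ
    rw [← Nat.card_eq_fintype_card]
    have he : MulAction.fixedBy (Fin n → Fin q) σ ≃ {f : Fin n → Fin q // f ∘ ⇑σ = f} := by
      refine Equiv.subtypeEquivRight (fun f => ?_)
      show σ • f = f ↔ f ∘ ⇑σ = f
      constructor
      · intro h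
        funext x
        show f (σ x) = f x
        conv_lhs => rw [← h]
        show f (σ⁻¹ (σ x)) = f x
        rw [(show σ⁻¹ (σ x) = x from Equiv.symm_apply_apply σ x)]
      · intro h
        funext x
        show f (σ⁻¹ x) = f x
        have h2 := congrFun h (σ⁻¹ x)
        simp only [Function.comp_apply, (show σ (σ⁻¹ x) = x from Equiv.apply_symm_apply σ x)] at h2
        exact h2.symm
    rw [Nat.card_congr he, card_inv σ (Fin q), Fintype.card_fin]
  have horb : Fintype.card
      (MulAction.orbitRel.Quotient (Equiv.Perm (Fin n)) (Fin n → Fin q)) =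
      Nat.multichoose q n := by
    rw [Fintype.card_congr (orbitQuotEquivSym n q), Sym.card_sym_eq_multichoose,
      Fintype.card_fin]
  calc ∑ σ : Equiv.Perm (Fin n), q ^ ncyc σ
      = ∑ σ : Equiv.Perm (Fin n), Fintype.card (MulAction.fixedBy (Fin n → Fin q) σ) :=
        Finset.sum_congr rfl (fun σ _ => (hfix σ).symm)
    _ = _ * Fintype.card (Equiv.Perm (Fin n)) := burn
    _ = Nat.multichoose q n * n.factorial := by rw [horb, Fintype.card_perm, Fintype.card_fin]
    _ = ∏ j ∈ Finset.range n, (q + j) := by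
        have hprod : ∀ k, ∏ j ∈ Finset.range k, (q + j) = q.ascFactorial k := by
          intro k
          induction k with
          | zero => simp
          | succ k ih => rw [Finset.prod_range_succ, ih, Nat.ascFactorial_succ, Nat.mul_comm]
        rw [hprod, Nat.multichoose_eq, Nat.ascFactorial_eq_factorial_mul_choose', Nat.mul_comm]

open Polynomial in
lemma sum_X_pow_ncyc (n : ℕ) :
    ∑ σ : Equiv.Perm (Fin n), (Polynomial.X : Polynomial ℚ) ^ ncyc σ =
      ∏ j ∈ Finset.range n, (Polynomial.X + Polynomial.C (j : ℚ)) := by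
  apply Polynomial.eq_of_infinite_eval_eq
  apply Set.infinite_of_injective_forall_mem (f := (Nat.cast : ℕ → ℚ))
    (hi := Nat.cast_injective)
  intro q
  simp only [Set.mem_setOf_eq, Polynomial.eval_finset_sum, Polynomial.eval_pow,
    Polynomial.eval_X, Polynomial.eval_prod, Polynomial.eval_add, Polynomial.eval_C]
  exact_mod_cast congrArg (Nat.cast : ℕ → ℚ) (sum_pow_ncyc n q)

section Pollak

variable {n : ℕ}

/-- number of entries of `b` equal to `s mod (n+1)` -/
def xcnt (b : Fin n → ZMod (n + 1)) (s : ℕ) : ℕ :=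
  (Finset.univ.filter (fun i => b i = (s : ZMod (n + 1)))).card

def Gfun (b : Fin n → ZMod (n + 1)) (k : ℕ) : ℤ :=
  (∑ j ∈ Finset.range k, (xcnt b j : ℤ)) - k

lemma sum_xcnt_window (b : Fin n → ZMod (n + 1)) (r : ℕ) :
    ∑ j ∈ Finset.range (n + 1), xcnt b (r + j) = n := by
  classical
  have hcard : ∑ s : ZMod (n + 1), (Finset.univ.filter (fun i => b i = s)).card = n := by
    rw [← Finset.card_eq_sum_card_fiberwise (f := b) (t := Finset.univ)
      (fun x _ => Finset.mem_univ _)]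
    simp
  refine Eq.trans (Finset.sum_nbij' (i := fun j => ((r + j : ℕ) : ZMod (n + 1)))
    (j := fun s => (s - (r : ZMod (n + 1))).val) ?_ ?_ ?_ ?_ ?_) hcard
  · intro a _; exact Finset.mem_univ _
  · intro s _; exact Finset.mem_range.2 (ZMod.val_lt _)
  · intro j hj
    show ((((r + j : ℕ)) : ZMod (n + 1)) - (r : ZMod (n + 1))).val = j
    rw [Nat.cast_add, add_sub_cancel_left, ZMod.val_cast_of_lt (Finset.mem_range.1 hj)]
  · intro s _
    show (((r + ((s - (r : ZMod (n + 1))).val) : ℕ)) : ZMod (n + 1)) = s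
    rw [Nat.cast_add, ZMod.natCast_val, ZMod.cast_id, add_sub_cancel]
  · intro j _; rfl

lemma Gfun_add (b : Fin n → ZMod (n + 1)) (k : ℕ) :
    Gfun b (k + (n + 1)) = Gfun b k - 1 := by
  unfold Gfun
  rw [Finset.sum_range_add]
  have : ∑ j ∈ Finset.range (n + 1), (xcnt b (k + j) : ℤ) = (n : ℤ) := by
    exact_mod_cast congrArg (Nat.cast : ℕ → ℤ) (sum_xcnt_window b k)
  rw [this]
  push_cast
  ring

/-- the window-start property: `r` begins a "good" rotation -/
def GoodStart (b : Fin n → ZMod (n + 1)) (r : ℕ) : Prop :=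
  ∀ j, r < j → j < r + (n + 1) → Gfun b r ≤ Gfun b j

lemma exists_unique_goodStart (b : Fin n → ZMod (n + 1)) :
    ∃! r : ℕ, r < n + 1 ∧ GoodStart b r := by
  have haux : ∀ r₁ r₂ : ℕ, r₁ < r₂ → r₂ < n + 1 → GoodStart b r₁ → GoodStart b r₂ → False := by
    intro r₁ r₂ h12 h2lt hg1 hg2
    have h1 : Gfun b r₁ ≤ Gfun b r₂ := hg1 r₂ h12 (by omega)
    have h2 : Gfun b r₂ ≤ Gfun b (r₁ + (n + 1)) := hg2 (r₁ + (n + 1)) (by omega) (by omega)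
    rw [Gfun_add] at h2
    omega
  -- existence: least minimizer of `Gfun b` on `range (n+1)`
  have hex : ∃ k, k < n + 1 ∧ ∀ m, m < n + 1 → Gfun b k ≤ Gfun b m := by
    obtain ⟨k, hk, hmin⟩ := Finset.exists_min_image (Finset.range (n + 1)) (Gfun b)
      ⟨0, Finset.mem_range.2 (Nat.succ_pos n)⟩
    exact ⟨k, Finset.mem_range.1 hk, fun m hm => hmin m (Finset.mem_range.2 hm)⟩
  set r := Nat.find hex with hrdef
  obtain ⟨hrlt, hrmin⟩ := Nat.find_spec hex
  have hrleast : ∀ k, k < r → Gfun b r < Gfun b k := by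
    intro k hk
    have hklt : k < n + 1 := lt_trans hk hrlt
    rcases lt_or_ge (Gfun b r) (Gfun b k) with h | h
    · exact h
    · exfalso
      have heq : Gfun b k = Gfun b r := le_antisymm h (hrmin k hklt)
      exact Nat.find_min hex hk ⟨hklt, fun m hm => heq ▸ hrmin m hm⟩
  have hgood : GoodStart b r := by
    intro j hj1 hj2
    rcases lt_or_ge j (n + 1) with h | h
    · exact hrmin j h
    · have hlt : j - (n + 1) < r := by omega
      have hGj : Gfun b j = Gfun b (j - (n + 1)) - 1 := by
        have := Gfun_add b (j - (n + 1))
        rwa [Nat.sub_add_cancel h] at this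
      have := hrleast _ hlt
      omega
  refine ⟨r, ⟨hrlt, hgood⟩, ?_⟩
  rintro r' ⟨hr'lt, hg'⟩
  by_contra hne'
  rcases lt_or_gt_of_ne hne' with h | h
  · exact haux r' r h hrlt hg' hgood
  · exact haux r r' h hr'lt hgood hg'

end Pollak

section Pollak2

variable {n : ℕ}

lemma card_filter_val_le (b : Fin n → ZMod (n + 1)) (t : ZMod (n + 1)) {m : ℕ} (hm : m < n) :
    (Finset.univ.filter (fun i => (b i + t).val ≤ m)).card =
      ∑ u ∈ Finset.range (m + 1), xcnt b ((-t).val + u) := by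
  classical
  rw [Finset.card_filter]
  have step : ∀ i : Fin n, (if (b i + t).val ≤ m then (1 : ℕ) else 0) =
      ∑ u ∈ Finset.range (m + 1), if (b i + t).val = u then 1 else 0 := by
    intro i
    rw [Finset.sum_ite_eq (Finset.range (m + 1)) ((b i + t).val) (fun _ => (1 : ℕ))]
    simp [Finset.mem_range, Nat.lt_succ_iff]
  rw [Finset.sum_congr rfl (fun i _ => step i), Finset.sum_comm]
  refine Finset.sum_congr rfl (fun u hu => ?_)
  have hu' : u < n + 1 := by
    have := Finset.mem_range.1 hu; omega
  have key : ∀ c : ZMod (n + 1), (c + t).val = u ↔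
      c = ((((-t).val + u : ℕ)) : ZMod (n + 1)) := by
    intro c
    constructor
    · intro h
      have h1 : c + t = (u : ZMod (n + 1)) := by
        rw [← h, ZMod.natCast_val, ZMod.cast_id]
      rw [Nat.cast_add, ZMod.natCast_val, ZMod.cast_id]
      have := eq_sub_of_add_eq h1
      rw [this, sub_eq_neg_add]
    · intro h
      have h1 : c + t = (u : ZMod (n + 1)) := by
        rw [h, Nat.cast_add, ZMod.natCast_val, ZMod.cast_id]
        ring
      rw [h1, ZMod.val_cast_of_lt hu']
  rw [← Finset.card_filter]
  unfold xcnt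
  rw [Finset.filter_congr (fun i _ => key (b i))]

lemma Gfun_window (b : Fin n → ZMod (n + 1)) (r m : ℕ) :
    Gfun b (r + (m + 1)) - Gfun b r =
      (∑ u ∈ Finset.range (m + 1), (xcnt b (r + u) : ℤ)) - ((m : ℤ) + 1) := by
  unfold Gfun
  rw [Finset.sum_range_add]
  push_cast
  ring

lemma shift_park_iff (b : Fin n → ZMod (n + 1)) (t : ZMod (n + 1)) :
    (∀ m, m < n → m + 1 ≤ (Finset.univ.filter (fun i => (b i + t).val ≤ m)).card) ↔
      GoodStart b ((-t).val) := by
  constructor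
  · intro h j hj1 hj2
    set r' := (-t).val with hr'
    have hm : j - r' - 1 < n := by omega
    have h2 := h (j - r' - 1) hm
    rw [card_filter_val_le b t hm] at h2
    have h3 := Gfun_window b r' (j - r' - 1)
    have hj' : r' + (j - r' - 1 + 1) = j := by omega
    rw [hj'] at h3
    have h2' : ((j - r' - 1 : ℕ) : ℤ) + 1 ≤
        ∑ u ∈ Finset.range (j - r' - 1 + 1), (xcnt b (r' + u) : ℤ) := by
      exact_mod_cast h2
    omega
  · intro hg m hm
    have h2 := card_filter_val_le b t hm
    have h3 := Gfun_window b ((-t).val) m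
    have h4 := hg ((-t).val + (m + 1)) (by omega) (by omega)
    rw [h2]
    have : ((m : ℤ) + 1) ≤ ∑ u ∈ Finset.range (m + 1), (xcnt b ((-t).val + u) : ℤ) := by
      omega
    push_cast at this
    exact_mod_cast this

lemma exists_unique_shift (b : Fin n → ZMod (n + 1)) :
    ∃! t : ZMod (n + 1), ∀ m, m < n →
      m + 1 ≤ (Finset.univ.filter (fun i => (b i + t).val ≤ m)).card := by
  obtain ⟨r, ⟨hrlt, hrgood⟩, hruniq⟩ := exists_unique_goodStart b
  refine ⟨-(r : ZMod (n + 1)), ?_, ?_⟩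
  · apply (shift_park_iff b _).2
    have hval : ((- - (r : ZMod (n + 1))).val) = r := by
      rw [neg_neg, ZMod.val_cast_of_lt hrlt]
    rw [hval]
    exact hrgood
  · intro t ht
    have hr' := hruniq ((-t).val) ⟨ZMod.val_lt _, (shift_park_iff b t).1 ht⟩
    have hneg : -t = (r : ZMod (n + 1)) := by
      rw [← hr', ZMod.natCast_val, ZMod.cast_id]
    rw [← hneg, neg_neg]

end Pollak2

section Pollak3

variable {n : ℕ}

lemma card_park_inv (hn : 1 ≤ n) (σ : Equiv.Perm (Fin n)) :
    Nat.card {a : Fin n → Fin n //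
        (∀ m : Fin n, (m : ℕ) + 1 ≤ (Finset.univ.filter (fun i => a i ≤ m)).card) ∧
        a ∘ σ = a} * (n + 1) = (n + 1) ^ ncyc σ := by
  classical
  have hcastval : ∀ (k : Fin n), (((k : ℕ) : ZMod (n + 1))).val = (k : ℕ) := fun k =>
    ZMod.val_cast_of_lt (Nat.lt_succ_of_lt k.isLt)
  -- the shift map
  set Ψ : {a : Fin n → Fin n //
      (∀ m : Fin n, (m : ℕ) + 1 ≤ (Finset.univ.filter (fun i => a i ≤ m)).card) ∧
      a ∘ σ = a} × ZMod (n + 1) → {b : Fin n → ZMod (n + 1) // b ∘ σ = b} :=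
    fun p => ⟨fun i => (((p.1.1 i : ℕ) : ZMod (n + 1)) + p.2), by
      funext i
      show (((p.1.1 (σ i) : ℕ) : ZMod (n + 1)) + p.2) = _
      rw [show p.1.1 (σ i) = p.1.1 i from congrFun p.1.2.2 i]⟩ with hΨ
  -- parking condition transfer
  have hparkiff : ∀ (a : Fin n → Fin n) (t : ZMod (n + 1)),
      (∀ m, m < n → m + 1 ≤ (Finset.univ.filter
          (fun i => (((((a i : ℕ)) : ZMod (n + 1)) + t) + -t).val ≤ m)).card) ↔
      (∀ m : Fin n, (m : ℕ) + 1 ≤ (Finset.univ.filter (fun i => a i ≤ m)).card) := by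
    intro a t
    have hpred : ∀ (m : Fin n) (i : Fin n),
        ((((((a i : ℕ)) : ZMod (n + 1)) + t) + -t).val ≤ (m : ℕ)) ↔ a i ≤ m := by
      intro m i
      rw [add_neg_cancel_right, hcastval, Fin.le_def]
    constructor
    · intro h m
      have := h (m : ℕ) m.isLt
      rwa [Finset.filter_congr (fun i _ => hpred m i)] at this
    · intro h m hm
      have := h ⟨m, hm⟩
      rwa [Finset.filter_congr (fun i _ => hpred ⟨m, hm⟩ i)]
  have hbij : Function.Bijective Ψ := by
    constructor
    · rintro ⟨⟨a₁, hp₁, hi₁⟩, t₁⟩ ⟨⟨a₂, hp₂, hi₂⟩, t₂⟩ h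
      have heq : ∀ i, (((a₁ i : ℕ) : ZMod (n + 1)) + t₁) = (((a₂ i : ℕ) : ZMod (n + 1)) + t₂) :=
        fun i => congrFun (congrArg Subtype.val h) i
      set b : Fin n → ZMod (n + 1) := fun i => ((a₁ i : ℕ) : ZMod (n + 1)) + t₁ with hb
      obtain ⟨t₀, _, huniq⟩ := exists_unique_shift b
      have h1 : -t₁ = t₀ := huniq _ ((hparkiff a₁ t₁).2 hp₁)
      have h2 : -t₂ = t₀ := by
        apply huniq
        have : ∀ m, m < n → m + 1 ≤ (Finset.univ.filter
            (fun i => (((((a₂ i : ℕ)) : ZMod (n + 1)) + t₂) + -t₂).val ≤ m)).card :=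
          (hparkiff a₂ t₂).2 hp₂
        intro m hm
        have h3 := this m hm
        have hfe : ∀ i, b i = ((a₂ i : ℕ) : ZMod (n + 1)) + t₂ := fun i => heq i
        rwa [Finset.filter_congr (fun i _ => by rw [hfe i])]
      have ht : t₁ = t₂ := by
        have := h1.trans h2.symm
        exact neg_injective this
      have ha : a₁ = a₂ := by
        funext i
        have := heq i
        rw [ht] at this
        have hcc : ((a₁ i : ℕ) : ZMod (n + 1)) = ((a₂ i : ℕ) : ZMod (n + 1)) :=
          add_right_cancel this
        have := congrArg ZMod.val hcc
        rw [hcastval, hcastval] at this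
        exact Fin.ext this
      subst ht ha
      rfl
    · rintro ⟨b, hb⟩
      obtain ⟨t, ht, _⟩ := exists_unique_shift b
      set c : Fin n → ZMod (n + 1) := fun i => b i + t with hc
      have hvlt : ∀ i, (c i).val < n := by
        have h1 := ht (n - 1) (by omega)
        have h2 : (Finset.univ.filter (fun i => (b i + t).val ≤ n - 1)) = Finset.univ := by
          apply Finset.eq_univ_of_card
          have hle := Finset.card_filter_le Finset.univ (fun i => (b i + t).val ≤ n - 1)
          rw [Fintype.card_fin]
          rw [Finset.card_univ, Fintype.card_fin] at hle
          omega
        intro i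
        have hmem : i ∈ Finset.univ.filter (fun i => (b i + t).val ≤ n - 1) := by
          rw [h2]; exact Finset.mem_univ i
        have hle2 := (Finset.mem_filter.1 hmem).2
        have hce : (c i).val = (b i + t).val := rfl
        omega
      set a : Fin n → Fin n := fun i => ⟨(c i).val, hvlt i⟩ with ha
      have hca : ∀ i, ((a i : ℕ) : ZMod (n + 1)) = c i := by
        intro i
        show (((c i).val : ℕ) : ZMod (n + 1)) = c i
        rw [ZMod.natCast_val, ZMod.cast_id]
      have hpark : ∀ m : Fin n, (m : ℕ) + 1 ≤ (Finset.univ.filter (fun i => a i ≤ m)).card := by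
        apply (hparkiff a (-t)).1
        intro m hm
        have hthis := ht m hm
        have hfc : Finset.univ.filter
              (fun i => ((((a i : ℕ) : ZMod (n + 1)) + -t) + - -t).val ≤ m) =
            Finset.univ.filter (fun i => (b i + t).val ≤ m) :=
          Finset.filter_congr (fun i _ => by
            rw [hca i, neg_neg, neg_add_cancel_right])
        rw [hfc]
        exact hthis
      have hinv : a ∘ σ = a := by
        funext i
        apply Fin.ext
        show (c (σ i)).val = (c i).val
        have : b (σ i) = b i := congrFun hb i
        simp only [hc, this]
      refine ⟨⟨⟨a, hpark, hinv⟩, -t⟩, ?_⟩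
      apply Subtype.ext
      funext i
      show ((a i : ℕ) : ZMod (n + 1)) + -t = b i
      rw [hca i]
      show b i + t + -t = b i
      rw [add_neg_cancel_right]
  have hmain : Nat.card ({a : Fin n → Fin n //
      (∀ m : Fin n, (m : ℕ) + 1 ≤ (Finset.univ.filter (fun i => a i ≤ m)).card) ∧
      a ∘ σ = a} × ZMod (n + 1)) = Nat.card {b : Fin n → ZMod (n + 1) // b ∘ σ = b} :=
    Nat.card_congr (Equiv.ofBijective Ψ hbij)
  rw [Nat.card_prod, Nat.card_eq_fintype_card (α := ZMod (n + 1)), ZMod.card] at hmain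
  rw [hmain, card_inv σ (ZMod (n + 1)), ZMod.card]

end Pollak3

end Aux

/-- `Pₙ(α)/n! = (1/(n+1))·binom((n+1)α+n−1, n)` (in the equivalent cleared form
`(n+1)·Pₙ(α) = ∏_{j=0}^{n−1}((n+1)α + j)`, since
`binom(x+n−1,n) = (1/n!)∏_{j=0}^{n-1}(x+j)`), and the coefficient of `αᵏ` in
`Pₙ(α)` is the number of pairs `(a, σ)` of a parking function `a` of length `n`
and a permutation `σ` of `{1,…,n}` with `k` cycles such that `a∘σ = a`. -/
theorem parking_stabilizer_polynomial (n : ℕ) (hn : 1 ≤ n) :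
    Polynomial.C ((n : ℚ) + 1) * Ppoly n =
      ∏ j ∈ Finset.range n,
        (Polynomial.C ((n : ℚ) + 1) * Polynomial.X + Polynomial.C (j : ℚ)) ∧
    ∀ k : ℕ, (Ppoly n).coeff k =
      (Nat.card {aσ : (Fin n → Fin n) × Equiv.Perm (Fin n) //
        (∀ m : Fin n,
          (m : ℕ) + 1 ≤ (Finset.univ.filter (fun i => aσ.1 i ≤ m)).card) ∧
        aσ.1 ∘ aσ.2 = aσ.1 ∧
        aσ.2.cycleType.card + (n - aσ.2.support.card) = k} : ℚ) := by
  classical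
  have hIcc : Finset.Icc 1 (n - 1) = Finset.Ico 1 n := by
    rw [← Finset.Ico_add_one_right_eq_Icc]
    congr 1
    omega
  have hA : Polynomial.C ((n : ℚ) + 1) * Ppoly n =
      ∏ j ∈ Finset.range n,
        (Polynomial.C ((n : ℚ) + 1) * Polynomial.X + Polynomial.C (j : ℚ)) := by
    rw [Finset.range_eq_Ico,
      Finset.prod_eq_prod_Ico_succ_bot (by omega : (0 : ℕ) < n)]
    rw [Ppoly, hIcc]
    rw [Nat.cast_zero, Polynomial.C_0, add_zero]
    ring
  refine ⟨hA, fun k => ?_⟩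
  -- polynomial side
  have hkey : Polynomial.C ((n : ℚ) + 1) * Ppoly n =
      ∑ σ : Equiv.Perm (Fin n),
        Polynomial.C (((n : ℚ) + 1) ^ ncyc σ) * Polynomial.X ^ ncyc σ := by
    rw [hA]
    have h1 : ∏ j ∈ Finset.range n,
          (Polynomial.C ((n : ℚ) + 1) * Polynomial.X + Polynomial.C (j : ℚ)) =
        (∏ j ∈ Finset.range n, (Polynomial.X + Polynomial.C (j : ℚ))).comp
          (Polynomial.C ((n : ℚ) + 1) * Polynomial.X) := by
      rw [Polynomial.prod_comp]
      refine Finset.prod_congr rfl (fun j _ => ?_)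
      rw [Polynomial.add_comp, Polynomial.X_comp, Polynomial.C_comp]
    rw [h1, ← sum_X_pow_ncyc n, Polynomial.sum_comp]
    exact Finset.sum_congr rfl (fun σ _ => by
      rw [Polynomial.pow_comp, Polynomial.X_comp, mul_pow, ← Polynomial.C_pow])
  -- coefficient extraction
  have hc1 : ((n : ℚ) + 1) * (Ppoly n).coeff k =
      ∑ σ : Equiv.Perm (Fin n), (if ncyc σ = k then ((n : ℚ) + 1) ^ k else 0) := by
    have hck := congrArg (fun p => Polynomial.coeff p k) hkey
    simp only [Polynomial.coeff_C_mul, Polynomial.finset_sum_coeff] at hck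
    rw [hck]
    refine Finset.sum_congr rfl (fun σ _ => ?_)
    rw [Polynomial.coeff_X_pow]
    by_cases h : ncyc σ = k
    · subst h; simp
    · simp [h, Ne.symm h]
  -- counting side
  set Sk := {aσ : (Fin n → Fin n) × Equiv.Perm (Fin n) //
    (∀ m : Fin n, (m : ℕ) + 1 ≤ (Finset.univ.filter (fun i => aσ.1 i ≤ m)).card) ∧
    aσ.1 ∘ aσ.2 = aσ.1 ∧
    aσ.2.cycleType.card + (n - aσ.2.support.card) = k} with hSk
  have hcount : Nat.card Sk * (n + 1) =
      ∑ σ : Equiv.Perm (Fin n), (if ncyc σ = k then (n + 1) ^ k else 0) := by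
    letI instA : ∀ σ : Equiv.Perm (Fin n), Fintype {a : Fin n → Fin n //
        (∀ m : Fin n, (m : ℕ) + 1 ≤ (Finset.univ.filter (fun i => a i ≤ m)).card) ∧
        a ∘ σ = a ∧ ncyc σ = k} := fun σ => Fintype.ofFinite _
    have e : Sk ≃ Σ σ : Equiv.Perm (Fin n), {a : Fin n → Fin n //
        (∀ m : Fin n, (m : ℕ) + 1 ≤ (Finset.univ.filter (fun i => a i ≤ m)).card) ∧
        a ∘ σ = a ∧ ncyc σ = k} :=
      { toFun := fun p => ⟨p.1.2, p.1.1, p.2⟩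
        invFun := fun q => ⟨(q.2.1, q.1), q.2.2⟩
        left_inv := fun p => rfl
        right_inv := fun q => rfl }
    rw [Nat.card_congr e, Nat.card_eq_fintype_card, Fintype.card_sigma, Finset.sum_mul]
    refine Finset.sum_congr rfl (fun σ _ => ?_)
    by_cases h : ncyc σ = k
    · rw [if_pos h]
      have e2 : {a : Fin n → Fin n //
          (∀ m : Fin n, (m : ℕ) + 1 ≤ (Finset.univ.filter (fun i => a i ≤ m)).card) ∧
          a ∘ σ = a ∧ ncyc σ = k} ≃ {a : Fin n → Fin n //
          (∀ m : Fin n, (m : ℕ) + 1 ≤ (Finset.univ.filter (fun i => a i ≤ m)).card) ∧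
          a ∘ σ = a} :=
        Equiv.subtypeEquivRight (fun a => by simp [h, and_assoc])
      rw [← Nat.card_eq_fintype_card, Nat.card_congr e2, card_park_inv hn σ, h]
    · rw [if_neg h]
      have : IsEmpty {a : Fin n → Fin n //
          (∀ m : Fin n, (m : ℕ) + 1 ≤ (Finset.univ.filter (fun i => a i ≤ m)).card) ∧
          a ∘ σ = a ∧ ncyc σ = k} := ⟨fun x => h x.2.2.2⟩
      rw [Fintype.card_eq_zero, Nat.zero_mul]
  have hfin : ((n : ℚ) + 1) * (Ppoly n).coeff k = ((n : ℚ) + 1) * (Nat.card Sk : ℚ) := by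
    rw [hc1]
    have hcast := congrArg (Nat.cast : ℕ → ℚ) hcount
    push_cast at hcast
    rw [← hcast]
    ring
  have hne : ((n : ℚ) + 1) ≠ 0 := by positivity
  exact mul_left_cancel₀ hne hfin
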